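/- Let m ≥ 2 and define p_k for k ≥ 1 by p_k = (1/k)·((m−1)/m)^k·(1/m)^{(k−1)/(m−1)}·C(m(k−1)/(m−1), (k−1)/(m−1)) if (m−1) divides (k−1), and p_k = 0 otherwise. Then ∑_{k≥1} p_k = 1. -/

import Mathlib

open Finset Filter Topology

/-- The coefficients of the limiting stationary cluster size distribution. -/
noncomputable def pcoef (m k : ℕ) : ℝ :=
  if (m - 1) ∣ (k - 1) then
    (1 / (k : ℝ)) * (((m : ℝ) - 1) / m) ^ k * ((1 : ℝ) / m) ^ ((k - 1) / (m - 1)) *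
      (Nat.choose (m * ((k - 1) / (m - 1))) ((k - 1) / (m - 1)) : ℝ)
  else 0



noncomputable def Acat (m r n : ℕ) : ℝ :=
  if n = 0 then 1 else (r : ℝ) / ((m * n + r : ℕ) : ℝ) * (Nat.choose (m * n + r) n)

lemma Acat_zero (m r : ℕ) : Acat m r 0 = 1 := by simp [Acat]

lemma Acat_nonneg (m r n : ℕ) : 0 ≤ Acat m r n := by
  unfold Acat; split
  · norm_num
  · positivity

lemma Acat_zero_left (m n : ℕ) (hn : n ≠ 0) : Acat m 0 n = 0 := by
  simp [Acat, hn]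

lemma Acat_formula (m r n : ℕ) (hr : 1 ≤ r) :
    Acat m r n = (r : ℝ) / ((m * n + r : ℕ) : ℝ) * (Nat.choose (m * n + r) n) := by
  unfold Acat; split
  · subst ‹n = 0›
    have h1 : ((r:ℝ)) ≠ 0 := by positivity
    simp [h1]
  · rfl

lemma Acat_pascal (m r n : ℕ) (hm : 1 ≤ m) :
    Acat m (r + 1) (n + 1) = Acat m r (n + 1) + Acat m (r + m) n := by
  obtain ⟨N, hNdef⟩ : ∃ N, N = m * (n + 1) + r := ⟨_, rfl⟩
  have hb : n + 1 ≤ m * (n + 1) := Nat.le_mul_of_pos_left (n+1) hm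
  have hN1 : m * (n + 1) + (r + 1) = N + 1 := by omega
  have hN2 : m * n + (r + m) = N := by rw [hNdef]; ring
  have hnN : n ≤ N := by omega
  have hNpos : 1 ≤ N := by omega
  have hL : Acat m (r+1) (n+1)
      = ((r:ℝ) + 1) / ((N:ℝ) + 1) * (Nat.choose (N+1) (n+1)) := by
    rw [Acat_formula m (r+1) (n+1) (by omega), hN1]
    push_cast; ring
  have hR1 : Acat m r (n+1) = (r:ℝ) / (N:ℝ) * (Nat.choose N (n+1)) := by
    unfold Acat
    rw [if_neg (Nat.succ_ne_zero n), show m * (n+1) + r = N from hNdef.symm]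
  have hR2 : Acat m (r+m) n = ((r:ℝ) + m) / (N:ℝ) * (Nat.choose N n) := by
    rw [Acat_formula m (r+m) n (by omega), hN2]
    push_cast; ring
  rw [hL, hR1, hR2]
  have hch : ((Nat.choose N (n+1) : ℝ)) * ((n:ℝ)+1) = (Nat.choose N n : ℝ) * ((N:ℝ) - n) := by
    have h := congrArg (Nat.cast : ℕ → ℝ) (Nat.choose_succ_right_eq N n)
    push_cast [Nat.cast_sub hnN] at h
    linarith [h]
  have hsucc : ((Nat.choose (N+1) (n+1) : ℕ) : ℝ)
      = (Nat.choose N n : ℝ) + (Nat.choose N (n+1) : ℝ) := by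
    exact_mod_cast congrArg (Nat.cast (R := ℝ)) (Nat.choose_succ_succ N n)
  have hNreal : (N:ℝ) = m * ((n:ℝ)+1) + r := by
    rw [hNdef]; push_cast; ring
  have hN0 : (N:ℝ) ≠ 0 := by positivity
  have hN10 : (N:ℝ) + 1 ≠ 0 := by positivity
  rw [hsucc]
  field_simp
  linear_combination ((m:ℝ) - (m:ℝ)*(N:ℝ) - (m:ℝ)*(N:ℝ)^2 + (m:ℝ)*(N:ℝ)*((N:ℝ)+1)) * hch + ((Nat.choose N n : ℝ) + (Nat.choose N (n+1) : ℝ)) * hNreal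


lemma Acat_conv (m : ℕ) (hm : 1 ≤ m) :
    ∀ n r s : ℕ, ∑ k ∈ range (n+1), Acat m r k * Acat m s (n-k) = Acat m (r+s) n := by
  intro n
  induction n using Nat.strong_induction_on with
  | _ n ih =>
    intro r s
    induction r with
    | zero =>
      rw [Finset.sum_eq_single 0]
      · simp [Acat_zero]
      · intro k _ hk0
        rw [Acat_zero_left m k hk0, zero_mul]
      · intro h
        exact absurd (Finset.mem_range.2 (Nat.succ_pos n)) h
    | succ r ihr =>
      rcases Nat.eq_zero_or_pos n with hn | hn
      · subst hn
        simp [Acat_zero]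
      obtain ⟨n', rfl⟩ : ∃ n', n = n' + 1 := ⟨n - 1, by omega⟩
      calc ∑ k ∈ range (n'+1+1), Acat m (r+1) k * Acat m s (n'+1-k)
          = (∑ k ∈ range (n'+1), Acat m (r+1) (k+1) * Acat m s (n'-k))
              + Acat m (r+1) 0 * Acat m s (n'+1) := by
            rw [Finset.sum_range_succ']
            congr 1
            exact Finset.sum_congr rfl fun k hk => by
              rw [show n'+1-(k+1) = n'-k from by omega]
        _ = ((∑ k ∈ range (n'+1), Acat m r (k+1) * Acat m s (n'-k))
              + Acat m r 0 * Acat m s (n'+1))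
              + (∑ k ∈ range (n'+1), Acat m (r+m) k * Acat m s (n'-k)) := by
            rw [Finset.sum_congr rfl (fun k (hk : k ∈ range (n'+1)) => by
              rw [Acat_pascal m r k hm, add_mul]),
              Finset.sum_add_distrib, Acat_zero, Acat_zero]
            ring
        _ = Acat m (r+s) (n'+1) + Acat m (r+m+s) n' := by
            have e : ∑ k ∈ range (n'+1+1), Acat m r k * Acat m s (n'+1-k)
                = (∑ k ∈ range (n'+1), Acat m r (k+1) * Acat m s (n'-k))
                  + Acat m r 0 * Acat m s (n'+1) := by
              rw [Finset.sum_range_succ']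
              congr 1
              exact Finset.sum_congr rfl fun k hk => by
                rw [show n'+1-(k+1) = n'-k from by omega]
            rw [ih n' (by omega) (r+m) s, ← ihr, e]
        _ = Acat m (r+1+s) (n'+1) := by
            rw [show r+1+s = (r+s)+1 from by omega, Acat_pascal m (r+s) n' hm,
              show r+m+s = (r+s)+m from by omega]


noncomputable def Ssum (m : ℕ) (x : ℝ) (r N : ℕ) : ℝ :=
  ∑ n ∈ range N, Acat m r n * x ^ n

lemma Ssum_nonneg (m : ℕ) {x : ℝ} (hx : 0 ≤ x) (r N : ℕ) : 0 ≤ Ssum m x r N := by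
  refine Finset.sum_nonneg fun n _ => ?_
  exact mul_nonneg (Acat_nonneg m r n) (pow_nonneg hx n)

lemma Ssum_mono (m : ℕ) {x : ℝ} (hx : 0 ≤ x) (r : ℕ) {N N' : ℕ} (h : N ≤ N') :
    Ssum m x r N ≤ Ssum m x r N' := by
  refine Finset.sum_le_sum_of_subset_of_nonneg (Finset.range_subset_range.2 h) fun n _ _ => ?_
  exact mul_nonneg (Acat_nonneg m r n) (pow_nonneg hx n)

private lemma disj (N : ℕ) :
    (↑(range N) : Set ℕ).PairwiseDisjoint (fun n => (Finset.HasAntidiagonal.antidiagonal n : Finset (ℕ × ℕ))) := by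
  intro a _ b _ hab
  simp only [Finset.disjoint_left]
  intro p hpa hpb
  rw [Finset.HasAntidiagonal.mem_antidiagonal] at hpa hpb
  omega

lemma key_biUnion (m : ℕ) (hm : 1 ≤ m) (x : ℝ) (r s N : ℕ) :
    ∑ p ∈ (range N).biUnion (fun n => Finset.HasAntidiagonal.antidiagonal n),
        (Acat m r p.1 * Acat m s p.2 * x ^ (p.1 + p.2))
      = Ssum m x (r+s) N := by
  rw [Finset.sum_biUnion (disj N)]
  refine Finset.sum_congr rfl fun n _ => ?_
  have h1 : ∑ p ∈ Finset.HasAntidiagonal.antidiagonal n, (Acat m r p.1 * Acat m s p.2 * x ^ (p.1 + p.2))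
      = ∑ p ∈ Finset.HasAntidiagonal.antidiagonal n, (Acat m r p.1 * Acat m s p.2) * x ^ n := by
    refine Finset.sum_congr rfl fun p hp => ?_
    rw [Finset.HasAntidiagonal.mem_antidiagonal] at hp
    rw [hp]
  rw [h1, ← Finset.sum_mul, Finset.Nat.sum_antidiagonal_eq_sum_range_succ_mk,
    Acat_conv m hm n r s]

lemma key_prod (m : ℕ) (x : ℝ) (r s P Q : ℕ) :
    ∑ p ∈ range P ×ˢ range Q, (Acat m r p.1 * Acat m s p.2 * x ^ (p.1 + p.2))
      = Ssum m x r P * Ssum m x s Q := by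
  unfold Ssum
  rw [Finset.sum_mul_sum, ← Finset.sum_product']
  refine Finset.sum_congr rfl fun p _ => ?_
  rw [pow_add]; ring

lemma conv_le (m : ℕ) (hm : 1 ≤ m) {x : ℝ} (hx : 0 ≤ x) (r s N : ℕ) :
    Ssum m x (r+s) N ≤ Ssum m x r N * Ssum m x s N := by
  rw [← key_biUnion m hm x r s N, ← key_prod m x r s N N]
  refine Finset.sum_le_sum_of_subset_of_nonneg ?_ fun p _ _ => ?_
  · intro p hp
    rw [Finset.mem_biUnion] at hp
    obtain ⟨n, hn, hp⟩ := hp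
    rw [Finset.HasAntidiagonal.mem_antidiagonal] at hp
    rw [Finset.mem_range] at hn
    rw [Finset.mem_product, Finset.mem_range, Finset.mem_range]
    omega
  · exact mul_nonneg (mul_nonneg (Acat_nonneg _ _ _) (Acat_nonneg _ _ _)) (pow_nonneg hx _)

lemma le_conv (m : ℕ) (hm : 1 ≤ m) {x : ℝ} (hx : 0 ≤ x) (r s P Q : ℕ) :
    Ssum m x r P * Ssum m x s Q ≤ Ssum m x (r+s) (P+Q) := by
  rw [← key_biUnion m hm x r s (P+Q), ← key_prod m x r s P Q]
  refine Finset.sum_le_sum_of_subset_of_nonneg ?_ fun p _ _ => ?_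
  · intro p hp
    rw [Finset.mem_product, Finset.mem_range, Finset.mem_range] at hp
    rw [Finset.mem_biUnion]
    exact ⟨p.1 + p.2, Finset.mem_range.2 (by omega), Finset.HasAntidiagonal.mem_antidiagonal.2 rfl⟩
  · exact mul_nonneg (mul_nonneg (Acat_nonneg _ _ _) (Acat_nonneg _ _ _)) (pow_nonneg hx _)

lemma pow_le_Ssum (m : ℕ) (hm : 1 ≤ m) {x : ℝ} (hx : 0 ≤ x) (K : ℕ) :
    ∀ r, 1 ≤ r → (Ssum m x 1 K) ^ r ≤ Ssum m x r (r * K) := by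
  intro r hr
  induction r, hr using Nat.le_induction with
  | base => simp [one_mul]
  | succ r hr ih =>
    calc (Ssum m x 1 K) ^ (r+1) = (Ssum m x 1 K) ^ r * Ssum m x 1 K := by ring
      _ ≤ Ssum m x r (r*K) * Ssum m x 1 K := by
          refine mul_le_mul_of_nonneg_right ih (Ssum_nonneg m hx 1 K)
      _ ≤ Ssum m x (r+1) (r*K + K) := le_conv m hm hx r 1 (r*K) K
      _ = Ssum m x (r+1) ((r+1)*K) := by rw [show r*K + K = (r+1)*K from by ring]

lemma Ssum_le_pow (m : ℕ) (hm : 1 ≤ m) {x : ℝ} (hx : 0 ≤ x) (N : ℕ) :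
    ∀ r, 1 ≤ r → Ssum m x r N ≤ (Ssum m x 1 N) ^ r := by
  intro r hr
  induction r, hr using Nat.le_induction with
  | base => simp
  | succ r hr ih =>
    calc Ssum m x (r+1) N ≤ Ssum m x r N * Ssum m x 1 N := conv_le m hm hx r 1 N
      _ ≤ (Ssum m x 1 N) ^ r * Ssum m x 1 N := by
          refine mul_le_mul_of_nonneg_right ?_ (Ssum_nonneg m hx 1 N)
          exact ih
      _ = (Ssum m x 1 N) ^ (r+1) := by ring

lemma Ssum_one_succ (m : ℕ) (hm : 1 ≤ m) (x : ℝ) (N : ℕ) :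
    Ssum m x 1 (N+1) = 1 + x * Ssum m x m N := by
  unfold Ssum
  rw [Finset.sum_range_succ']
  have h1 : ∀ n, Acat m 1 (n+1) = Acat m m n := by
    intro n
    have := Acat_pascal m 0 n hm
    rw [Acat_zero_left m (n+1) (Nat.succ_ne_zero n)] at this
    simpa using this
  have h2 : ∑ n ∈ range N, Acat m 1 (n+1) * x ^ (n+1)
      = x * ∑ n ∈ range N, Acat m m n * x ^ n := by
    rw [Finset.mul_sum]
    refine Finset.sum_congr rfl fun n _ => ?_
    rw [h1 n, pow_succ]; ring
  rw [h2, Acat_zero]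
  ring


lemma hasSum_Acat_crit (q : ℕ) :
    HasSum (fun n => Acat (q+2) 1 n * (((q:ℝ)+1)^(q+1) / ((q:ℝ)+2)^(q+2)) ^ n)
      (((q:ℝ)+2) / ((q:ℝ)+1)) := by
  set x0 : ℝ := ((q:ℝ)+1)^(q+1) / ((q:ℝ)+2)^(q+2) with hx0def
  set β : ℝ := ((q:ℝ)+2) / ((q:ℝ)+1) with hβdef
  have hq1 : (0:ℝ) < (q:ℝ)+1 := by positivity
  have hq2 : (0:ℝ) < (q:ℝ)+2 := by positivity
  have hx0 : 0 ≤ x0 := by positivity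
  have hβpos : 0 < β := by positivity
  have hm2 : 1 ≤ q + 2 := by omega
  have hcrit : x0 * β ^ (q+2) = 1 / ((q:ℝ)+1) := by
    rw [hβdef, hx0def, div_pow]
    have e1 : ((q:ℝ)+1)^(q+2) = ((q:ℝ)+1)^(q+1) * ((q:ℝ)+1) := pow_succ _ _
    field_simp
    rw [e1]; ring
  have hgβ : 1 + x0 * β ^ (q+2) = β := by
    rw [hcrit, hβdef]; field_simp; ring
  set f : ℕ → ℝ := fun n => Acat (q+2) 1 n * x0 ^ n with hfdef
  have hfnn : ∀ n, 0 ≤ f n := fun n =>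
    mul_nonneg (Acat_nonneg _ _ _) (pow_nonneg hx0 n)
  have hu_eq : ∀ N, ∑ i ∈ range N, f i = Ssum (q+2) x0 1 N := fun N => rfl
  have hub : ∀ N, Ssum (q+2) x0 1 N ≤ β := by
    intro N
    induction N with
    | zero =>
      have : Ssum (q+2) x0 1 0 = 0 := by simp [Ssum]
      rw [this]; exact hβpos.le
    | succ N ih =>
      rw [Ssum_one_succ (q+2) hm2 x0 N]
      calc 1 + x0 * Ssum (q+2) x0 (q+2) N
          ≤ 1 + x0 * (Ssum (q+2) x0 1 N) ^ (q+2) := by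
            have := Ssum_le_pow (q+2) hm2 hx0 N (q+2) (by omega)
            nlinarith [this, hx0]
        _ ≤ 1 + x0 * β ^ (q+2) := by
            have hp : (Ssum (q+2) x0 1 N) ^ (q+2) ≤ β ^ (q+2) :=
              pow_le_pow_left₀ (Ssum_nonneg (q+2) hx0 1 N) ih (q+2)
            nlinarith [hp, hx0]
        _ = β := hgβ
  have hsum : Summable f :=
    summable_of_sum_range_le hfnn (fun N => by rw [hu_eq]; exact hub N)
  set L : ℝ := ∑' n, f n with hLdef
  have hLle : L ≤ β := hsum.tsum_le_of_sum_range_le (fun N => by rw [hu_eq]; exact hub N)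
  have huL : ∀ N, Ssum (q+2) x0 1 N ≤ L := fun N => by
    rw [← hu_eq]
    exact hsum.sum_le_tsum (range N) (fun i _ => hfnn i)
  have hL1 : 1 ≤ L := by
    have h1 : Ssum (q+2) x0 1 1 = 1 := by simp [Ssum, Acat_zero]
    have := huL 1
    linarith
  have hu_tendsto : Tendsto (fun N => Ssum (q+2) x0 1 N) atTop (𝓝 L) := by
    have := hsum.hasSum.tendsto_sum_nat
    simpa [hu_eq] using this
  have hfix : 1 + x0 * L ^ (q+2) ≤ L := by
    have hstep : ∀ K, 1 + x0 * (Ssum (q+2) x0 1 K) ^ (q+2) ≤ L := by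
      intro K
      have h1 : (Ssum (q+2) x0 1 K) ^ (q+2) ≤ Ssum (q+2) x0 (q+2) ((q+2)*K) :=
        pow_le_Ssum (q+2) hm2 hx0 K (q+2) (by omega)
      have h2 : 1 + x0 * Ssum (q+2) x0 (q+2) ((q+2)*K) = Ssum (q+2) x0 1 ((q+2)*K + 1) :=
        (Ssum_one_succ (q+2) hm2 x0 ((q+2)*K)).symm
      calc 1 + x0 * (Ssum (q+2) x0 1 K) ^ (q+2)
          ≤ 1 + x0 * Ssum (q+2) x0 (q+2) ((q+2)*K) := by nlinarith [h1, hx0]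
        _ = Ssum (q+2) x0 1 ((q+2)*K + 1) := h2
        _ ≤ L := huL _
    have ht : Tendsto (fun K => 1 + x0 * (Ssum (q+2) x0 1 K) ^ (q+2)) atTop
        (𝓝 (1 + x0 * L ^ (q+2))) := by
      exact (((hu_tendsto.pow (q+2)).const_mul x0).const_add 1)
    exact le_of_tendsto ht (Eventually.of_forall hstep)
  have hβle : β ≤ L := by
    by_contra hcon
    push_neg at hcon
    set w : ℝ := L / β with hwdef
    have hw0 : 0 ≤ w := div_nonneg (by linarith) hβpos.le
    have hw1 : w < 1 := (div_lt_one hβpos).2 hcon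
    have hLw : L = w * β := by
      rw [hwdef]; field_simp
    have key1 : x0 * L ^ (q+2) = w ^ (q+2) * (1 / ((q:ℝ)+1)) := by
      rw [hLw, mul_pow, ← hcrit]; ring
    have hfix2 : ((q:ℝ)+1) + w ^ (q+2) ≤ w * ((q:ℝ)+2) := by
      have h' := hfix
      rw [key1, hLw, hβdef] at h'
      have hq1' : ((q:ℝ)+1) ≠ 0 := ne_of_gt hq1
      have e1 : (1 + w^(q+2) * (1/((q:ℝ)+1))) * ((q:ℝ)+1) = ((q:ℝ)+1) + w^(q+2) := by
        field_simp
      have e2 : (w * (((q:ℝ)+2)/((q:ℝ)+1))) * ((q:ℝ)+1) = w*((q:ℝ)+2) := by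
        field_simp
      have h'' := mul_le_mul_of_nonneg_right h' hq1.le
      rw [e1, e2] at h''
      exact h''
    have hgs : (∑ i ∈ range (q+2), w ^ i) * (w - 1) = w ^ (q+2) - 1 := geom_sum_mul w (q+2)
    have hlt : ∑ i ∈ range (q+2), w ^ i < ((q:ℝ)+2) := by
      have hle : ∀ i ∈ range (q+2), w ^ i ≤ 1 := fun i _ => pow_le_one₀ hw0 hw1.le
      have hmem : (1 : ℕ) ∈ range (q+2) := mem_range.2 (by omega)
      have hstrict : w ^ 1 < 1 := by simpa using hw1
      calc ∑ i ∈ range (q+2), w ^ i < ∑ _i ∈ range (q+2), (1:ℝ) :=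
            Finset.sum_lt_sum hle ⟨1, hmem, hstrict⟩
        _ = ((q:ℝ)+2) := by simp
    have hpos : 0 < (1 - w) * (((q:ℝ)+2) - ∑ i ∈ range (q+2), w ^ i) :=
      mul_pos (by linarith) (by linarith)
    nlinarith [hgs, hpos, hfix2]
  have hLeq : L = β := le_antisymm hLle hβle
  exact hLeq ▸ hsum.hasSum



lemma choose_id (q n : ℕ) :
    ((q+1)*n+1) * Nat.choose ((q+2)*n+1) n = ((q+2)*n+1) * Nat.choose ((q+2)*n) n := by
  have a1 := Nat.add_one_mul_choose_eq ((q+2)*n) n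
  have b1 := Nat.choose_succ_right_eq ((q+2)*n+1) n
  have e : (q+2)*n+1-n = (q+1)*n+1 := by
    have e2 : (q+2)*n = (q+1)*n + n := by ring
    omega
  rw [e] at b1
  calc ((q+1)*n+1) * Nat.choose ((q+2)*n+1) n
      = Nat.choose ((q+2)*n+1) n * ((q+1)*n+1) := by ring
    _ = Nat.choose ((q+2)*n+1) (n+1) * (n+1) := b1.symm
    _ = ((q+2)*n+1) * Nat.choose ((q+2)*n) n := by
        rw [← a1]

lemma pcoef_term (q n : ℕ) :
    pcoef (q+2) ((q+1)*n+1)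
      = (((q:ℝ)+1)/((q:ℝ)+2))
        * (Acat (q+2) 1 n * (((q:ℝ)+1)^(q+1) / ((q:ℝ)+2)^(q+2)) ^ n) := by
  have hq1 : (0:ℝ) < (q:ℝ)+1 := by positivity
  have hq2 : (0:ℝ) < (q:ℝ)+2 := by positivity
  have hd : ((q+2) - 1) ∣ (((q+1)*n+1) - 1) := by
    simpa using Dvd.intro n rfl
  have hdivq : (((q+1)*n+1) - 1) / ((q+2) - 1) = n := by
    simp only [Nat.add_sub_cancel, show (q+2)-1 = q+1 from rfl]
    exact Nat.mul_div_cancel_left n (by omega)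
  unfold pcoef
  rw [if_pos hd, hdivq]
  rw [Acat_formula (q+2) 1 n (le_refl 1)]
  have hC : (((q+2)*n+1 : ℕ) : ℝ) * (Nat.choose ((q+2)*n) n : ℝ)
      = (((q+1)*n+1 : ℕ) : ℝ) * (Nat.choose ((q+2)*n+1) n : ℝ) := by
    exact_mod_cast congrArg (Nat.cast (R := ℝ)) (choose_id q n).symm
  have hpow1 : (((q:ℝ)+1)/((q:ℝ)+2))^((q+1)*n+1)
      = (((q:ℝ)+1)/((q:ℝ)+2)) * (((((q:ℝ)+1)/((q:ℝ)+2))^(q+1))^n) := by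
    rw [pow_succ, pow_mul]; ring
  have hpow2 : ((((q:ℝ)+1)/((q:ℝ)+2))^(q+1))^n * ((1:ℝ)/((q:ℝ)+2))^n
      = (((q:ℝ)+1)^(q+1) / ((q:ℝ)+2)^(q+2))^n := by
    rw [← mul_pow]
    congr 1
    rw [div_pow, pow_succ, div_mul_div_comm, mul_one]
    ring
  push_cast
  push_cast at hC
  rw [show ((q:ℝ)+2)*n+1 = ((q:ℝ)+2)*n+1 from rfl] at hC
  have hden1 : ((q:ℝ)+1)*n+1 ≠ 0 := by positivity
  have hden2 : ((q:ℝ)+2)*n+1 ≠ 0 := by positivity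
  rw [show ((q:ℝ)+2-1) = (q:ℝ)+1 from by ring, hpow1]
  set P : ℝ := ((((q:ℝ)+1)/((q:ℝ)+2))^(q+1))^n with hP
  set Q : ℝ := ((1:ℝ)/((q:ℝ)+2))^n with hQ
  set R : ℝ := (((q:ℝ)+1)^(q+1) / ((q:ℝ)+2)^(q+2))^n with hR
  set C0 : ℝ := (Nat.choose ((q+2)*n) n : ℝ) with hC0
  set C1 : ℝ := (Nat.choose ((q+2)*n+1) n : ℝ) with hC1
  have hsc : (1/(((q:ℝ)+1)*n+1)) * C0 = (1/(((q:ℝ)+2)*n+1)) * C1 := by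
    rw [div_mul_eq_mul_div, div_mul_eq_mul_div, div_eq_div_iff hden1 hden2]
    push_cast at hC ⊢
    linarith [hC]
  rw [← hpow2, ← hsc]
  ring

/-- The limiting stationary cluster size distribution is a probability
distribution: `∑_{k≥1} p_k = 1` (index shifted: `k = j + 1`). -/
theorem pcoef_sums_to_one (m : ℕ) (hm : 2 ≤ m) :
    ∑' j : ℕ, pcoef m (j + 1) = 1 := by
  obtain ⟨q, rfl⟩ : ∃ q, m = q + 2 := ⟨m - 2, by omega⟩
  have hβ := hasSum_Acat_crit q
  have hq1 : (0:ℝ) < (q:ℝ)+1 := by positivity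
  have hq2 : (0:ℝ) < (q:ℝ)+2 := by positivity
  have h2 := hβ.mul_left (((q:ℝ)+1)/((q:ℝ)+2))
  have hval : (((q:ℝ)+1)/((q:ℝ)+2)) * (((q:ℝ)+2)/((q:ℝ)+1)) = 1 := by
    field_simp
  rw [hval] at h2
  have hfun : (fun n => pcoef (q+2) ((q+1)*n+1))
      = fun n => (((q:ℝ)+1)/((q:ℝ)+2))
        * (Acat (q+2) 1 n * (((q:ℝ)+1)^(q+1) / ((q:ℝ)+2)^(q+2)) ^ n) :=
    funext (pcoef_term q)
  have h1 : HasSum (fun n => pcoef (q+2) ((q+1)*n+1)) 1 := by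
    rw [hfun]; exact h2
  have hg : Function.Injective (fun n : ℕ => (q+1)*n) := fun a b h => by
    exact Nat.eq_of_mul_eq_mul_left (by omega) h
  have hvan : ∀ j, j ∉ Set.range (fun n : ℕ => (q+1)*n) → pcoef (q+2) (j+1) = 0 := by
    intro j hj
    have hnd : ¬ (((q+2) - 1) ∣ ((j+1) - 1)) := by
      simp only [Nat.add_sub_cancel, show (q+2)-1 = q+1 from rfl]
      rintro ⟨c, hc⟩
      exact hj ⟨c, hc.symm⟩
    unfold pcoef
    rw [if_neg hnd]
  have h3 : HasSum (fun j => pcoef (q+2) (j+1)) 1 :=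
    (Function.Injective.hasSum_iff hg hvan).1 h1
  exact h3.tsum_eq
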